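/- Let H be a finite-dimensional complex inner product space, let d ≥ 1, let v_1, …, v_d ∈ H be an orthonormal family, and let w_1, …, w_d ∈ H be unit vectors with ‖v_k − w_k‖ ≤ ε for every k, where 0 < ε ≤ (1/36)·(5/2)^{2−2d}. Then the family w_1, …, w_d is linearly independent, and the vectors e_1, …, e_d obtained from w_1, …, w_d by Gram–Schmidt orthonormalization satisfy ‖e_k − v_k‖ ≤ 4√ε·((2/5)·(5/2)^k − 1) + ε for every k ∈ {1, …, d}. -/

import Mathlib

set_option maxHeartbeats 1000000

open InnerProductSpace


/-- Helper instance (the instance search for `WellFoundedLT (Fin d)` gets stuck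
inside `gramSchmidtNormed` otherwise). -/
instance finWellFoundedLT (d : ℕ) : WellFoundedLT (Fin d) := inferInstance

theorem gramSchmidt_stability_under_perturbation
    {H : Type*} [NormedAddCommGroup H] [InnerProductSpace ℂ H] [FiniteDimensional ℂ H]
    (d : ℕ) (hd : 1 ≤ d) (v w : Fin d → H)
    (hv : Orthonormal ℂ v) (hw : ∀ k, ‖w k‖ = 1)
    (ε : ℝ) (hε0 : 0 < ε) (hε : ε ≤ (1 / 36) * (5 / 2 : ℝ) ^ (2 - 2 * (d : ℤ)))
    (hclose : ∀ k, ‖v k - w k‖ ≤ ε) :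
    LinearIndependent ℂ w ∧
    ∀ k : Fin d, ‖InnerProductSpace.gramSchmidtNormed ℂ w k - v k‖ ≤
      4 * Real.sqrt ε * ((2 / 5) * (5 / 2 : ℝ) ^ ((k : ℕ) + 1) - 1) + ε := by
  set c : ℝ := 5 / 2 with hc
  set s : ℝ := Real.sqrt ε with hsdef
  set g : Fin d → H := gramSchmidt ℂ w with hg
  have hs0 : 0 ≤ s := Real.sqrt_nonneg ε
  have hsε : s * s = ε := Real.mul_self_sqrt hε0.le
  have hc0 : (0:ℝ) < c := by norm_num [hc]
  have hc1 : (1:ℝ) ≤ c := by norm_num [hc]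
  -- s ≤ (1/6) * c ^ (1 - d)
  have hs : s ≤ (1 / 6) * c ^ ((1:ℤ) - d) := by
    have hsq : (1 / 36) * c ^ (2 - 2 * (d : ℤ)) = ((1 / 6) * c ^ ((1:ℤ) - d)) ^ 2 := by
      rw [mul_pow, ← zpow_natCast (c ^ ((1:ℤ) - d)), ← zpow_mul]
      norm_num
      ring_nf
    have h1 : s ≤ Real.sqrt (((1 / 6) * c ^ ((1:ℤ) - d)) ^ 2) := by
      rw [hsdef]
      apply Real.sqrt_le_sqrt
      rw [← hsq]; exact hε
    rwa [Real.sqrt_sq (by positivity)] at h1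
  have hs6 : s ≤ 1 / 6 := by
    have h1 : c ^ ((1:ℤ) - d) ≤ c ^ (0:ℤ) :=
      zpow_le_zpow_right₀ hc1 (by omega)
    rw [zpow_zero] at h1
    nlinarith
  -- key power bound
  have hpow : ∀ i : Fin d, s * c ^ (i : ℕ) ≤ 1 / 6 := by
    intro i
    have h1 : s * c ^ (i : ℕ) ≤ (1 / 6) * c ^ ((1:ℤ) - d) * c ^ (i : ℕ) :=
      mul_le_mul_of_nonneg_right hs (by positivity)
    have h2 : (1 / 6) * c ^ ((1:ℤ) - d) * c ^ (i : ℕ) = (1 / 6) * c ^ ((1:ℤ) - d + (i:ℕ)) := by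
      rw [mul_assoc, ← zpow_natCast c (i:ℕ), ← zpow_add₀ (ne_of_gt hc0)]
    have h3 : c ^ ((1:ℤ) - d + (i:ℕ)) ≤ c ^ (0:ℤ) := by
      apply zpow_le_zpow_right₀ hc1
      have := i.isLt
      omega
    rw [zpow_zero] at h3
    rw [h2] at h1
    nlinarith
  have hcp1 : ∀ n : ℕ, (1:ℝ) ≤ c ^ n := fun n => one_le_pow₀ hc1
  -- the norm of g i is close to 1 once the perturbation bound holds
  have hlow : ∀ i : Fin d, ‖g i - w i‖ ≤ 2 * s * (c ^ (i:ℕ) - 1) → (2:ℝ)/3 ≤ ‖g i‖ := by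
    intro i hi
    have habs := abs_norm_sub_norm_le (g i) (w i)
    rw [hw i] at habs
    have h2 := abs_le.mp habs
    have := hpow i
    nlinarith [h2.1, h2.2]
  -- inner products of distinct w's are small
  have hww : ∀ i k : Fin d, i ≠ k → ‖(inner ℂ (w i) (w k) : ℂ)‖ ≤ 2 * ε := by
    intro i k hik
    have e1 : (inner ℂ (w i) (w k) : ℂ) =
        inner ℂ (w i - v i) (w k) + inner ℂ (v i) (w k - v k) + inner ℂ (v i) (v k) := by
      simp only [inner_sub_left, inner_sub_right]
      rw [hv.2 hik]
      ring
    rw [e1, hv.2 hik, add_zero]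
    have b1 : ‖(inner ℂ (w i - v i) (w k) : ℂ)‖ ≤ ε := by
      calc ‖(inner ℂ (w i - v i) (w k) : ℂ)‖ ≤ ‖w i - v i‖ * ‖w k‖ := norm_inner_le_norm _ _
        _ ≤ ε := by rw [hw k, mul_one, norm_sub_rev]; exact hclose i
    have b2 : ‖(inner ℂ (v i) (w k - v k) : ℂ)‖ ≤ ε := by
      calc ‖(inner ℂ (v i) (w k - v k) : ℂ)‖ ≤ ‖v i‖ * ‖w k - v k‖ := norm_inner_le_norm _ _
        _ ≤ ε := by rw [hv.1 i, one_mul, norm_sub_rev]; exact hclose k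
    calc ‖(inner ℂ (w i - v i) (w k) : ℂ) + inner ℂ (v i) (w k - v k)‖
        ≤ ‖(inner ℂ (w i - v i) (w k) : ℂ)‖ + ‖(inner ℂ (v i) (w k - v k) : ℂ)‖ := norm_add_le _ _
      _ ≤ 2 * ε := by linarith
  -- geometric sum bound
  have hgeom : ∀ m : ℕ, ∑ j ∈ Finset.range m, s * (3 * c ^ j - 5/2) ≤ 2 * s * (c ^ m - 1) := by
    intro m
    induction m with
    | zero => simp
    | succ m ih =>
      rw [Finset.sum_range_succ, pow_succ]
      have := hcp1 m
      nlinarith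
  -- main inductive estimate
  have main : ∀ k : Fin d, ‖g k - w k‖ ≤ 2 * s * (c ^ (k:ℕ) - 1) := by
    have H : ∀ n : ℕ, ∀ k : Fin d, (k : ℕ) = n → ‖g k - w k‖ ≤ 2 * s * (c ^ (k:ℕ) - 1) := by
      intro n
      induction n using Nat.strong_induction_on with
      | _ n ih =>
        intro k hk
        have IH : ∀ j : Fin d, j < k → ‖g j - w j‖ ≤ 2 * s * (c ^ (j:ℕ) - 1) := by
          intro j hj
          exact ih (j:ℕ) (by rw [← hk]; exact hj) j rfl
        -- termwise bound on the projections
        have hterm : ∀ i ∈ Finset.Iio k,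
            ‖((ℂ ∙ g i).starProjection (w k) : H)‖ ≤ s * (3 * c ^ (i:ℕ) - 5/2) := by
          intro i hi
          rw [Finset.mem_Iio] at hi
          have hgi := IH i hi
          have hgin : (2:ℝ)/3 ≤ ‖g i‖ := hlow i hgi
          have hgz : ‖g i‖ ≠ 0 := by intro h; rw [h] at hgin; norm_num at hgin
          have hik : i ≠ k := ne_of_lt hi
          have hiw : ‖(inner ℂ (g i) (w k) : ℂ)‖ ≤ 2 * s * (c ^ (i:ℕ) - 1) + 2 * ε := by
            have e1 : (inner ℂ (g i) (w k) : ℂ) = inner ℂ (g i - w i) (w k) + inner ℂ (w i) (w k) := by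
              rw [inner_sub_left]; ring
            rw [e1]
            have b1 : ‖(inner ℂ (g i - w i) (w k) : ℂ)‖ ≤ 2 * s * (c ^ (i:ℕ) - 1) := by
              calc ‖(inner ℂ (g i - w i) (w k) : ℂ)‖ ≤ ‖g i - w i‖ * ‖w k‖ := norm_inner_le_norm _ _
                _ ≤ 2 * s * (c ^ (i:ℕ) - 1) := by rw [hw k, mul_one]; exact hgi
            calc ‖(inner ℂ (g i - w i) (w k) : ℂ) + inner ℂ (w i) (w k)‖
                ≤ ‖(inner ℂ (g i - w i) (w k) : ℂ)‖ + ‖(inner ℂ (w i) (w k) : ℂ)‖ := norm_add_le _ _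
              _ ≤ 2 * s * (c ^ (i:ℕ) - 1) + 2 * ε := by
                  have := hww i k hik; linarith
          have hp : ‖((ℂ ∙ g i).starProjection (w k) : H)‖ =
              ‖(inner ℂ (g i) (w k) : ℂ)‖ / ‖g i‖ := by
            rw [Submodule.starProjection_singleton, norm_smul, norm_div, RCLike.norm_ofReal,
              abs_of_nonneg (by positivity : (0:ℝ) ≤ ‖g i‖ ^ 2)]
            field_simp
          rw [hp, div_le_iff₀ (by linarith : (0:ℝ) < ‖g i‖)]
          have hrhs0 : 0 ≤ s * (3 * c ^ (i:ℕ) - 5/2) := by nlinarith [hcp1 (i:ℕ)]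
          nlinarith [mul_le_mul_of_nonneg_left hgin hrhs0, hcp1 (i:ℕ)]
        -- now sum up
        have hsum1 : ∑ i ∈ Finset.Iio k, (s * (3 * c ^ ((i : Fin d):ℕ) - 5/2)) =
            ∑ j ∈ Finset.range (k:ℕ), (s * (3 * c ^ j - 5/2)) := by
          rw [← Nat.Iio_eq_range, ← Fin.map_valEmbedding_Iio, Finset.sum_map]
          rfl
        calc ‖g k - w k‖
            = ‖∑ i ∈ Finset.Iio k, ((ℂ ∙ g i).starProjection (w k) : H)‖ := by
              rw [hg, gramSchmidt_def ℂ w k, sub_sub_cancel_left, norm_neg]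
          _ ≤ ∑ i ∈ Finset.Iio k, ‖((ℂ ∙ g i).starProjection (w k) : H)‖ :=
              norm_sum_le _ _
          _ ≤ ∑ i ∈ Finset.Iio k, (s * (3 * c ^ ((i : Fin d):ℕ) - 5/2)) :=
              Finset.sum_le_sum hterm
          _ = ∑ j ∈ Finset.range (k:ℕ), (s * (3 * c ^ j - 5/2)) := hsum1
          _ ≤ 2 * s * (c ^ (k:ℕ) - 1) := hgeom (k:ℕ)
    exact fun k => H (k:ℕ) k rfl
  -- nonvanishing
  have hgn : ∀ k : Fin d, (2:ℝ)/3 ≤ ‖g k‖ := fun k => hlow k (main k)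
  have hgz : ∀ k : Fin d, g k ≠ 0 := by
    intro k h
    have := hgn k
    rw [h, norm_zero] at this
    norm_num at this
  -- linear independence
  have hgli : LinearIndependent ℂ g :=
    linearIndependent_of_ne_zero_of_inner_eq_zero hgz fun i j hij =>
      gramSchmidt_orthogonal ℂ w hij
  have hwli : LinearIndependent ℂ w := by
    rw [linearIndependent_iff_card_eq_finrank_span]
    rw [linearIndependent_iff_card_eq_finrank_span] at hgli
    rw [hgli]
    unfold Set.finrank
    rw [hg, span_gramSchmidt ℂ w]
  refine ⟨hwli, ?_⟩
  intro k
  have hk := main k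
  have hkn := hgn k
  have he1 : ‖gramSchmidtNormed ℂ w k‖ = 1 := gramSchmidtNormed_unit_length k hwli
  have hnz' : (‖g k‖ : ℂ) ≠ 0 := by
    simp only [ne_eq, Complex.ofReal_eq_zero, norm_eq_zero]
    exact hgz k
  have he2 : g k = (‖g k‖ : ℂ) • gramSchmidtNormed ℂ w k := by
    rw [gramSchmidtNormed, ← hg]
    exact (smul_inv_smul₀ hnz' (g k)).symm
  have h1 : ‖gramSchmidtNormed ℂ w k - g k‖ ≤ ‖g k - w k‖ := by
    have e3 : gramSchmidtNormed ℂ w k - g k = ((1:ℂ) - (‖g k‖:ℂ)) • gramSchmidtNormed ℂ w k := by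
      rw [sub_smul, one_smul, ← he2]
    rw [e3, norm_smul, he1, mul_one]
    have e4 : ((1:ℂ) - (‖g k‖:ℂ)) = ((1 - ‖g k‖ : ℝ) : ℂ) := by push_cast; ring
    rw [e4, Complex.norm_real, Real.norm_eq_abs]
    have := abs_norm_sub_norm_le (w k) (g k)
    rw [hw k, norm_sub_rev] at this
    calc |1 - ‖g k‖| ≤ ‖g k - w k‖ := this
      _ ≤ ‖g k - w k‖ := le_refl _
  have t1 : ‖gramSchmidtNormed ℂ w k - v k‖ ≤
      ‖gramSchmidtNormed ℂ w k - g k‖ + ‖g k - w k‖ + ‖w k - v k‖ := by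
    calc ‖gramSchmidtNormed ℂ w k - v k‖
        = ‖(gramSchmidtNormed ℂ w k - g k) + (g k - w k) + (w k - v k)‖ := by
          congr 1; abel
      _ ≤ _ := norm_add₃_le
  have t2 : ‖w k - v k‖ ≤ ε := by rw [norm_sub_rev]; exact hclose k
  have t3 : (2/5 : ℝ) * c ^ ((k:ℕ) + 1) = c ^ (k:ℕ) := by
    rw [pow_succ, hc]; ring
  have : (4:ℝ) * s * ((2 / 5) * c ^ ((k:ℕ) + 1) - 1) + ε = 4 * s * (c ^ (k:ℕ) - 1) + ε := by
    rw [t3]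
  rw [hc] at this ⊢
  rw [this]
  linarith
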